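/- Fix real numbers ξ, θ, θ⁻ and 0 < σ_min < σ_max. For N ≥ 2 let σᵢ = σ_min + ((i−1)/(N−1))·(σ_max − σ_min) for i ∈ {1,…,N}, Dᵢᴺ(θ, θ⁻) = (σ_min/σᵢ₊₁)ξ + (1 − σ_min/σᵢ₊₁)θ − (σ_min/σᵢ)ξ − (1 − σ_min/σᵢ)θ⁻, and Lᴺ(θ, θ⁻) = (1/(N−1))·Σ_{i=1}^{N−1} Dᵢᴺ(θ, θ⁻)². Then lim_{N→∞} Lᴺ(θ, θ⁻) = ((θ − θ⁻)²/(σ_max − σ_min)) · ∫_{σ_min}^{σ_max} (1 − σ_min/σ)² dσ. In particular, when θ⁻ ≠ θ the limiting objective does not depend on the data point ξ. -/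

import Mathlib

set_option maxHeartbeats 1000000



open Filter Finset

/-- The `i`-th noise level of the uniform discretization with `N` steps. -/
noncomputable def sigmaLvl (σmin σmax : ℝ) (N i : ℕ) : ℝ :=
  σmin + (((i : ℝ) - 1) / ((N : ℝ) - 1)) * (σmax - σmin)

/-- The difference `Dᵢᴺ(θ, θ⁻)` of student and teacher outputs in the toy model. -/
noncomputable def Dtoy (ξ θ θm σmin σmax : ℝ) (N i : ℕ) : ℝ :=
  (σmin / sigmaLvl σmin σmax N (i + 1)) * ξ + (1 - σmin / sigmaLvl σmin σmax N (i + 1)) * θ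
    - (σmin / sigmaLvl σmin σmax N i) * ξ - (1 - σmin / sigmaLvl σmin σmax N i) * θm

/-- The consistency-matching loss `Lᴺ(θ, θ⁻)` in the toy model. -/
noncomputable def Ltoy (ξ θ θm σmin σmax : ℝ) (N : ℕ) : ℝ :=
  (1 / ((N : ℝ) - 1)) * ∑ i ∈ Finset.Icc 1 (N - 1), (Dtoy ξ θ θm σmin σmax N i) ^ 2


section auxiliaryCM

section helpers
variable {σmin σmax : ℝ}

/-- auxiliary integrand -/
noncomputable def gfun (σmin s : ℝ) : ℝ := (1 - σmin / s) ^ 2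

lemma gfun_nonneg (σmin s : ℝ) : 0 ≤ gfun σmin s := sq_nonneg _

lemma gfun_mono (h0 : 0 < σmin) {s t : ℝ} (hs : σmin ≤ s) (hst : s ≤ t) :
    gfun σmin s ≤ gfun σmin t := by
  have hs0 : 0 < s := lt_of_lt_of_le h0 hs
  have ht0 : 0 < t := lt_of_lt_of_le hs0 hst
  have h1 : σmin / t ≤ σmin / s := div_le_div_of_nonneg_left h0.le hs0 hst
  have h2 : σmin / s ≤ 1 := (div_le_one hs0).2 hs
  have h3 : 0 ≤ 1 - σmin / s := by linarith
  exact pow_le_pow_left₀ h3 (by linarith) 2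

lemma gfun_le_one (h0 : 0 < σmin) {s : ℝ} (hs : σmin ≤ s) : gfun σmin s ≤ 1 := by
  have hs0 : 0 < s := lt_of_lt_of_le h0 hs
  have h2 : σmin / s ≤ 1 := (div_le_one hs0).2 hs
  have h4 : 0 ≤ σmin / s := div_nonneg h0.le hs0.le
  have h3 : 0 ≤ 1 - σmin / s := by linarith
  calc (1 - σmin/s)^2 ≤ 1^2 := pow_le_pow_left₀ h3 (by linarith) 2
  _ = 1 := one_pow 2

lemma gfun_integrable (h0 : 0 < σmin) {a b : ℝ} (ha : σmin ≤ a) (hb : σmin ≤ b) :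
    IntervalIntegrable (gfun σmin) MeasureTheory.volume a b := by
  apply ContinuousOn.intervalIntegrable
  apply ContinuousOn.pow
  apply continuousOn_const.sub
  apply continuousOn_const.div continuousOn_id
  intro x hx
  have : σmin ≤ x := le_trans (le_min ha hb) hx.1
  exact ne_of_gt (lt_of_lt_of_le h0 this)

lemma gfun_int_lb (h0 : 0 < σmin) {a b : ℝ} (ha : σmin ≤ a) (hab : a ≤ b) :
    (b - a) * gfun σmin a ≤ ∫ s in a..b, gfun σmin s := by
  have hga : IntervalIntegrable (fun _ => gfun σmin a) MeasureTheory.volume a b :=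
    intervalIntegrable_const
  have h := intervalIntegral.integral_mono_on hab hga (gfun_integrable h0 ha (ha.trans hab))
    (fun x hx => gfun_mono h0 ha hx.1)
  simpa [intervalIntegral.integral_const, smul_eq_mul] using h

lemma gfun_int_ub (h0 : 0 < σmin) {a b : ℝ} (ha : σmin ≤ a) (hab : a ≤ b) :
    (∫ s in a..b, gfun σmin s) ≤ (b - a) * gfun σmin b := by
  have hgb : IntervalIntegrable (fun _ => gfun σmin b) MeasureTheory.volume a b :=
    intervalIntegrable_const
  have h := intervalIntegral.integral_mono_on hab (gfun_integrable h0 ha (ha.trans hab)) hgb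
    (fun x hx => gfun_mono h0 (ha.trans hx.1) hx.2)
  simpa [intervalIntegral.integral_const, smul_eq_mul] using h

end helpers


lemma key_bound (ξ θ θm σmin σmax : ℝ) (h0 : 0 < σmin) (h1 : σmin < σmax)
    (N : ℕ) (hN : 2 ≤ N) :
    |Ltoy ξ θ θm σmin σmax N
        - (θ - θm) ^ 2 / (σmax - σmin) * ∫ s in σmin..σmax, (1 - σmin / s) ^ 2|
      ≤ ((θ - θm) ^ 2 + (σmax - σmin) / σmin
          * (2 * |θ - θm| * |ξ - θ| + (σmax - σmin) / σmin * (ξ - θ) ^ 2)) / ((N : ℝ) - 1) := by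
  have hd : 0 < σmax - σmin := by linarith
  set nr : ℝ := (N : ℝ) - 1 with hnrdef
  have hnr1 : 1 ≤ nr := by
    have : (2 : ℝ) ≤ N := by exact_mod_cast hN
    simp only [hnrdef]; linarith
  have hnr0 : 0 < nr := lt_of_lt_of_le one_pos hnr1
  set h : ℝ := (σmax - σmin) / nr with hhdef
  have hh0 : 0 < h := div_pos hd hnr0
  have hhle : h ≤ σmax - σmin := by
    rw [hhdef]; exact div_le_self hd.le hnr1
  set a : ℕ → ℝ := fun k => sigmaLvl σmin σmax N (k + 1) with hadef
  have hcastN : ((N - 1 : ℕ) : ℝ) = nr := by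
    have : 1 ≤ N := by omega
    push_cast [this]; ring
  have haval : ∀ k : ℕ, a k = σmin + (k : ℝ) * h := by
    intro k
    simp only [hadef, sigmaLvl, hhdef]
    push_cast
    field_simp
    have hne : (N:ℝ) - 1 ≠ 0 := by linarith [hnr0, hnrdef]
    rw [hnrdef, add_mul, div_mul_cancel₀ _ hne]; ring
  have hstep : ∀ k : ℕ, a (k + 1) = a k + h := by
    intro k
    rw [haval, haval]; push_cast; ring
  have ha0 : a 0 = σmin := by rw [haval]; simp
  have haN : a (N - 1) = σmax := by
    rw [haval, hcastN, hhdef]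
    field_simp
    ring
  have hlb : ∀ k : ℕ, σmin ≤ a k := by
    intro k
    rw [haval]
    nlinarith [Nat.cast_nonneg (α := ℝ) k]
  have hub : ∀ k : ℕ, k ≤ N - 1 → a k ≤ σmax := by
    intro k hk
    have : (k : ℝ) ≤ nr := by
      rw [← hcastN]; exact_mod_cast hk
    rw [haval]
    have : (k : ℝ) * h ≤ nr * h := by nlinarith
    have : nr * h = σmax - σmin := by
      rw [hhdef]; field_simp
    nlinarith [mul_le_mul_of_nonneg_right (show (k:ℝ) ≤ nr by rw [← hcastN]; exact_mod_cast hk) hh0.le]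
  set C₁ : ℝ := 2 * |θ - θm| * |ξ - θ| + (σmax - σmin) / σmin * (ξ - θ) ^ 2 with hC1def
  set c : ℝ := (θ - θm) ^ 2 with hcdef
  -- pointwise claim
  have claim1 : ∀ k : ℕ, k < N - 1 →
      |(Dtoy ξ θ θm σmin σmax N (1 + k)) ^ 2 - c * gfun σmin (a k)| ≤ h / σmin * C₁ := by
    intro k hk
    set s : ℝ := a k with hsdef
    set t : ℝ := a (k + 1) with htdef
    have hs1 : σmin ≤ s := hlb k
    have ht1 : σmin ≤ t := hlb (k + 1)
    have hs0 : 0 < s := lt_of_lt_of_le h0 hs1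
    have ht0 : 0 < t := lt_of_lt_of_le h0 ht1
    have hts : t = s + h := hstep k
    set ε : ℝ := σmin / t - σmin / s with hεdef
    set A : ℝ := 1 - σmin / s with hAdef
    have hD : Dtoy ξ θ θm σmin σmax N (1 + k) = ε * (ξ - θ) + A * (θ - θm) := by
      have e1 : sigmaLvl σmin σmax N (1 + k) = s := by
        rw [hsdef, hadef]; norm_num [Nat.add_comm]
      have e2 : sigmaLvl σmin σmax N (1 + k + 1) = t := by
        rw [htdef, hadef]; norm_num [Nat.add_comm]
      rw [Dtoy, e1, e2, hεdef, hAdef]; ring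
    have hA0 : 0 ≤ A := by
      rw [hAdef]
      have : σmin / s ≤ 1 := (div_le_one hs0).2 hs1
      linarith
    have hA1 : A ≤ 1 := by
      rw [hAdef]
      have : 0 ≤ σmin / s := div_nonneg h0.le hs0.le
      linarith
    have hgA : gfun σmin s = A ^ 2 := rfl
    have hε : |ε| ≤ h / σmin := by
      have hεval : ε = -(σmin * h / (s * t)) := by
        rw [hεdef, hts]; field_simp; ring
      rw [hεval, abs_neg, abs_of_nonneg (by positivity)]
      rw [div_le_div_iff₀ (by positivity) h0]
      have hst : σmin * σmin ≤ s * t := mul_le_mul hs1 ht1 h0.le hs0.le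
      nlinarith [hh0.le]
    have hdiff : (Dtoy ξ θ θm σmin σmax N (1 + k)) ^ 2 - c * gfun σmin (a k)
        = ε * (ξ - θ) * (ε * (ξ - θ) + 2 * A * (θ - θm)) := by
      rw [hD, ← hsdef, hgA, hcdef]; ring
    rw [hdiff, abs_mul]
    have b1 : |ε * (ξ - θ)| ≤ h / σmin * |ξ - θ| := by
      rw [abs_mul]
      exact mul_le_mul_of_nonneg_right hε (abs_nonneg _)
    have b2 : |ε * (ξ - θ) + 2 * A * (θ - θm)| ≤ h / σmin * |ξ - θ| + 2 * |θ - θm| := by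
      refine (abs_add_le _ _).trans ?_
      refine add_le_add b1 ?_
      rw [abs_mul, abs_mul, abs_two, abs_of_nonneg hA0]
      have := mul_le_mul_of_nonneg_right hA1 (abs_nonneg (θ - θm))
      linarith
    have hq : 0 < h / σmin := by positivity
    have hqle : h / σmin ≤ (σmax - σmin) / σmin := by
      gcongr
    calc |ε * (ξ - θ)| * |ε * (ξ - θ) + 2 * A * (θ - θm)|
        ≤ (h / σmin * |ξ - θ|) * (h / σmin * |ξ - θ| + 2 * |θ - θm|) := by
          apply mul_le_mul b1 b2 (abs_nonneg _) (by positivity)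
      _ = h / σmin * (2 * |θ - θm| * |ξ - θ|) + h / σmin * (h / σmin * |ξ - θ| ^ 2) := by
          ring
      _ ≤ h / σmin * (2 * |θ - θm| * |ξ - θ|)
            + h / σmin * ((σmax - σmin) / σmin * (ξ - θ) ^ 2) := by
          have h5 : h / σmin * |ξ - θ| ^ 2 ≤ (σmax - σmin) / σmin * (ξ - θ) ^ 2 := by
            rw [sq_abs]
            exact mul_le_mul_of_nonneg_right hqle (sq_nonneg _)
          have h6 := mul_le_mul_of_nonneg_left h5 hq.le
          linarith
      _ = h / σmin * C₁ := by rw [hC1def]; ring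
  -- integral squeeze
  have hint : ∀ k < N - 1, IntervalIntegrable (gfun σmin) MeasureTheory.volume (a k) (a (k+1)) :=
    fun k _ => gfun_integrable h0 (hlb k) (hlb (k+1))
  have hIsum : ∑ k ∈ Finset.range (N-1), ∫ s in a k..a (k+1), gfun σmin s
      = ∫ s in σmin..σmax, gfun σmin s := by
    rw [intervalIntegral.sum_integral_adjacent_intervals hint, ha0, haN]
  set G : ℝ := ∑ k ∈ Finset.range (N-1), gfun σmin (a k) with hGdef
  set I : ℝ := ∫ s in σmin..σmax, gfun σmin s with hIdef
  have hmono2 : ∀ k, a k ≤ a (k+1) := fun k => by rw [hstep]; linarith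
  have hlow : h * G ≤ I := by
    rw [← hIsum, hGdef, Finset.mul_sum]
    apply Finset.sum_le_sum
    intro k _
    have h7 := gfun_int_lb h0 (hlb k) (hmono2 k)
    have h8 : a (k+1) - a k = h := by rw [hstep]; ring
    rw [h8] at h7
    exact h7
  have hupp : I ≤ h * G + h := by
    have t1 : I ≤ ∑ k ∈ Finset.range (N-1), (h * gfun σmin (a (k+1))) := by
      rw [← hIsum]
      apply Finset.sum_le_sum
      intro k _
      have h7 := gfun_int_ub h0 (hlb k) (hmono2 k)
      have h8 : a (k+1) - a k = h := by rw [hstep]; ring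
      rw [h8] at h7
      exact h7
    have t3 : ∑ k ∈ Finset.range (N-1), (gfun σmin (a (k+1)) - gfun σmin (a k))
        = gfun σmin (a (N-1)) - gfun σmin (a 0) :=
      Finset.sum_range_sub (fun k => gfun σmin (a k)) (N-1)
    have t5 : ∑ k ∈ Finset.range (N-1), (gfun σmin (a (k+1)) - gfun σmin (a k))
        = (∑ k ∈ Finset.range (N-1), gfun σmin (a (k+1))) - G := by
      rw [hGdef, Finset.sum_sub_distrib]
    have t6 : ∑ k ∈ Finset.range (N-1), (h * gfun σmin (a (k+1)))
        = h * ∑ k ∈ Finset.range (N-1), gfun σmin (a (k+1)) := by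
      rw [Finset.mul_sum]
    have g0 : gfun σmin (a 0) = 0 := by
      rw [ha0]; simp [gfun, div_self (ne_of_gt h0)]
    have gN : gfun σmin (a (N-1)) ≤ 1 := by
      rw [haN]; exact gfun_le_one h0 h1.le
    have t7 : ∑ k ∈ Finset.range (N-1), gfun σmin (a (k+1)) ≤ G + 1 := by linarith
    have t8 := mul_le_mul_of_nonneg_left t7 hh0.le
    linarith
  clear_value nr h a C₁ c G I
  have hI2 : |h * G - I| ≤ h := by
    rw [abs_le]
    constructor <;> linarith
  -- sum reindex
  have hreindex : ∑ i ∈ Finset.Icc 1 (N-1), (Dtoy ξ θ θm σmin σmax N i)^2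
      = ∑ k ∈ Finset.range (N-1), (Dtoy ξ θ θm σmin σmax N (1+k))^2 := by
    have hic : Finset.Icc 1 (N-1) = Finset.Ico 1 N := by
      rw [← Finset.Ico_add_one_right_eq_Icc]
      congr 1
      omega
    rw [hic, Finset.sum_Ico_eq_sum_range]
  set S : ℝ := ∑ k ∈ Finset.range (N-1), (Dtoy ξ θ θm σmin σmax N (1+k))^2 with hSdef
  have hS : |S - c * G| ≤ nr * (h / σmin * C₁) := by
    rw [hSdef, hGdef, Finset.mul_sum, ← Finset.sum_sub_distrib]
    refine (Finset.abs_sum_le_sum_abs _ _).trans ?_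
    have hb := Finset.sum_le_card_nsmul (Finset.range (N-1))
      (fun k => |(Dtoy ξ θ θm σmin σmax N (1+k))^2 - c * gfun σmin (a k)|) (h/σmin*C₁)
      (fun k hk => claim1 k (Finset.mem_range.1 hk))
    simpa [Finset.card_range, nsmul_eq_mul, hcastN] using hb
  have hL : Ltoy ξ θ θm σmin σmax N = (1/nr) * S := by
    rw [Ltoy, hreindex, hSdef, ← hnrdef]
  have hInt_eq : (∫ s in σmin..σmax, (1 - σmin/s)^2) = I := by
    rw [hIdef]; rfl
  have e1 : (1/nr) * S - c/(σmax-σmin) * I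
      = (1/nr) * (S - c*G) + (c/(σmax-σmin)) * (h*G - I) := by
    rw [hhdef]; field_simp; ring
  have hcnn : (0:ℝ) ≤ c / (σmax - σmin) := by
    rw [hcdef]; exact div_nonneg (sq_nonneg _) hd.le
  rw [hL, hInt_eq]
  calc |(1/nr)*S - c/(σmax-σmin)*I|
      = |(1/nr) * (S - c*G) + (c/(σmax-σmin)) * (h*G - I)| := by rw [e1]
    _ ≤ (1/nr)*|S - c*G| + (c/(σmax-σmin))*|h*G - I| := by
        refine (abs_add_le _ _).trans ?_
        rw [abs_mul, abs_mul, abs_of_nonneg (by positivity : (0:ℝ) ≤ 1/nr),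
          abs_of_nonneg hcnn]
    _ ≤ (1/nr)*(nr*(h/σmin*C₁)) + (c/(σmax-σmin))*h :=
        add_le_add (mul_le_mul_of_nonneg_left hS (by positivity))
          (mul_le_mul_of_nonneg_left hI2 hcnn)
    _ = (c + (σmax-σmin)/σmin * C₁)/nr := by
        rw [hhdef]; field_simp; ring

end auxiliaryCM

/-- Proposition 1, equation (6): as `N → ∞` the toy consistency loss converges to
`((θ − θ⁻)²/(σmax − σmin)) ∫_{σmin}^{σmax} (1 − σmin/σ)² dσ`, which does not
depend on the data point `ξ`. -/
theorem limit_of_toy_consistency_loss (ξ θ θm σmin σmax : ℝ)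
    (h0 : 0 < σmin) (h1 : σmin < σmax) :
    Tendsto (fun N : ℕ => Ltoy ξ θ θm σmin σmax N) atTop
      (nhds ((θ - θm) ^ 2 / (σmax - σmin) * ∫ s in σmin..σmax, (1 - σmin / s) ^ 2)) := by
  rw [← tendsto_sub_nhds_zero_iff]
  set K : ℝ := (θ - θm) ^ 2 + (σmax - σmin) / σmin
      * (2 * |θ - θm| * |ξ - θ| + (σmax - σmin) / σmin * (ξ - θ) ^ 2) with hKdef
  apply squeeze_zero_norm' (a := fun N : ℕ => K / ((N : ℝ) - 1))
  · filter_upwards [eventually_ge_atTop 2] with N hN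
    simpa [Real.norm_eq_abs, hKdef] using key_bound ξ θ θm σmin σmax h0 h1 N hN
  · have h2 : Tendsto (fun N : ℕ => ((N : ℝ) - 1)) atTop atTop := by
      have := tendsto_atTop_add_const_right atTop (-1 : ℝ) tendsto_natCast_atTop_atTop
      simpa [sub_eq_add_neg] using this
    exact Tendsto.div_atTop tendsto_const_nhds h2
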